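/- The vector matroid on the 8 vectors in ℝ⁴ given by v1 = (-2,3,0,1), v2 = (0,0,1,1), v3 = (0,2,0,1), v4 = (1,0,3,1), v5 = (1,0,0,1), v6 = (0,1,2,1), v7 = (0,1,0,1), v8 = (4,0,0,1), with I_1 = {v1,v2}, I_2 = {v3,v4}, I_3 = {v5,v6}, I_4 = {v7,v8}, is a counterexample to C(2): these 8 vectors can be partitioned into two bases of ℝ⁴, each I_i is linearly independent, but there is no partition of the 8 vectors into two bases B'_1, B'_2 such that each I_i has one element in B'_1 and one element in B'_2. -/

import Mathlib

open Set Function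

/-- The eight vectors in `ℝ⁴` from Oxley's matroid `J`. -/
noncomputable def Jvec : Fin 8 → (Fin 4 → ℝ) :=
  ![![-2, 3, 0, 1], ![0, 0, 1, 1], ![0, 2, 0, 1], ![1, 0, 3, 1],
    ![1, 0, 0, 1], ![0, 1, 2, 1], ![0, 1, 0, 1], ![4, 0, 0, 1]]

/-- Linear independence of a subfamily of the eight vectors. -/
def JIndep (s : Set (Fin 8)) : Prop :=
  LinearIndependent ℝ (fun x : s => Jvec x)

/-- The four pairs `{v1,v2}, {v3,v4}, {v5,v6}, {v7,v8}` (by index). -/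
def Jpairs : Fin 4 → Set (Fin 8) :=
  ![{0, 1}, {2, 3}, {4, 5}, {6, 7}]

lemma JIndep.mono {s t : Set (Fin 8)} (h : JIndep s) (hts : t ⊆ s) : JIndep t :=
  h.comp (Set.inclusion hts) (Set.inclusion_injective hts)

lemma jindep_range (f : Fin 4 → Fin 8) (hf : Injective f) :
    JIndep (range f) ↔ (Matrix.of (Jvec ∘ f)).det ≠ 0 := by
  have h1 : JIndep (range f) ↔ LinearIndependent ℝ (Jvec ∘ f) :=
    (linearIndependent_equiv' (Equiv.ofInjective f hf) rfl).symm
  rw [h1]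
  exact (Matrix.linearIndependent_rows_iff_isUnit (A := Matrix.of (Jvec ∘ f))).trans
    (by rw [Matrix.isUnit_iff_isUnit_det, isUnit_iff_ne_zero])

lemma jndep (f : Fin 4 → Fin 8) (hf : Injective f) (h : (Matrix.of (Jvec ∘ f)).det = 0) :
    ¬ JIndep (range f) := fun hc => ((jindep_range f hf).1 hc) h

lemma pair_mem {a b : Fin 8} (hab : a ≠ b) {S : Set (Fin 8)}
    (h : (({a, b} : Set (Fin 8)) ∩ S).ncard = 1) : a ∈ S ↔ b ∉ S := by
  by_cases ha : a ∈ S <;> by_cases hb : b ∈ S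
  · exfalso
    have he : ({a, b} : Set (Fin 8)) ∩ S = {a, b} := by
      rw [Set.inter_eq_left]; rintro x (rfl | rfl) <;> assumption
    rw [he, Set.ncard_pair hab] at h
    exact absurd h (by norm_num)
  · simp [ha, hb]
  · simp [ha, hb]
  · exfalso
    have he : ({a, b} : Set (Fin 8)) ∩ S = ∅ := by
      ext x
      simp only [Set.mem_inter_iff, Set.mem_insert_iff, Set.mem_singleton_iff,
        Set.mem_empty_iff_false, iff_false, not_and]
      rintro (rfl | rfl) <;> assumption
    rw [he, Set.ncard_empty] at h
    exact absurd h (by norm_num)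

lemma ji0123 : JIndep ({0, 1, 2, 3} : Set (Fin 8)) := by
  rw [show ({0, 1, 2, 3} : Set (Fin 8)) = range ![0, 1, 2, 3] from by ext x; revert x; decide,
    jindep_range _ (by decide)]
  have hM : Matrix.of (Jvec ∘ ![0, 1, 2, 3]) = Matrix.of ![![-2, 3, 0, 1], ![0, 0, 1, 1], ![0, 2, 0, 1], ![1, 0, 3, 1]] := by
    ext i j; fin_cases i <;> fin_cases j <;> rfl
  rw [hM]
  simp [Matrix.det_succ_row_zero, Fin.sum_univ_succ, Fin.succAbove, Matrix.submatrix_apply, Fin.castSucc, Fin.castAdd, Fin.castLE, Fin.succ]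
  all_goals norm_num

lemma ji4567 : JIndep ({4, 5, 6, 7} : Set (Fin 8)) := by
  rw [show ({4, 5, 6, 7} : Set (Fin 8)) = range ![4, 5, 6, 7] from by ext x; revert x; decide,
    jindep_range _ (by decide)]
  have hM : Matrix.of (Jvec ∘ ![4, 5, 6, 7]) = Matrix.of ![![1, 0, 0, 1], ![0, 1, 2, 1], ![0, 1, 0, 1], ![4, 0, 0, 1]] := by
    ext i j; fin_cases i <;> fin_cases j <;> rfl
  rw [hM]
  simp [Matrix.det_succ_row_zero, Fin.sum_univ_succ, Fin.succAbove, Matrix.submatrix_apply, Fin.castSucc, Fin.castAdd, Fin.castLE, Fin.succ]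
  all_goals norm_num

lemma nd0246 : ¬ JIndep ({0, 2, 4, 6} : Set (Fin 8)) := by
  rw [show ({0, 2, 4, 6} : Set (Fin 8)) = range ![0, 2, 4, 6] from by ext x; revert x; decide]
  refine jndep _ (by decide) ?_
  have hM : Matrix.of (Jvec ∘ ![0, 2, 4, 6]) = Matrix.of ![![-2, 3, 0, 1], ![0, 2, 0, 1], ![1, 0, 0, 1], ![0, 1, 0, 1]] := by
    ext i j; fin_cases i <;> fin_cases j <;> rfl
  rw [hM]
  simp [Matrix.det_succ_row_zero, Fin.sum_univ_succ, Fin.succAbove, Matrix.submatrix_apply, Fin.castSucc, Fin.castAdd, Fin.castLE, Fin.succ]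
  all_goals norm_num

lemma nd0247 : ¬ JIndep ({0, 2, 4, 7} : Set (Fin 8)) := by
  rw [show ({0, 2, 4, 7} : Set (Fin 8)) = range ![0, 2, 4, 7] from by ext x; revert x; decide]
  refine jndep _ (by decide) ?_
  have hM : Matrix.of (Jvec ∘ ![0, 2, 4, 7]) = Matrix.of ![![-2, 3, 0, 1], ![0, 2, 0, 1], ![1, 0, 0, 1], ![4, 0, 0, 1]] := by
    ext i j; fin_cases i <;> fin_cases j <;> rfl
  rw [hM]
  simp [Matrix.det_succ_row_zero, Fin.sum_univ_succ, Fin.succAbove, Matrix.submatrix_apply, Fin.castSucc, Fin.castAdd, Fin.castLE, Fin.succ]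
  all_goals norm_num

lemma nd1347 : ¬ JIndep ({1, 3, 4, 7} : Set (Fin 8)) := by
  rw [show ({1, 3, 4, 7} : Set (Fin 8)) = range ![1, 3, 4, 7] from by ext x; revert x; decide]
  refine jndep _ (by decide) ?_
  have hM : Matrix.of (Jvec ∘ ![1, 3, 4, 7]) = Matrix.of ![![0, 0, 1, 1], ![1, 0, 3, 1], ![1, 0, 0, 1], ![4, 0, 0, 1]] := by
    ext i j; fin_cases i <;> fin_cases j <;> rfl
  rw [hM]
  simp [Matrix.det_succ_row_zero, Fin.sum_univ_succ, Fin.succAbove, Matrix.submatrix_apply, Fin.castSucc, Fin.castAdd, Fin.castLE, Fin.succ]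
  all_goals norm_num

lemma nd0257 : ¬ JIndep ({0, 2, 5, 7} : Set (Fin 8)) := by
  rw [show ({0, 2, 5, 7} : Set (Fin 8)) = range ![0, 2, 5, 7] from by ext x; revert x; decide]
  refine jndep _ (by decide) ?_
  have hM : Matrix.of (Jvec ∘ ![0, 2, 5, 7]) = Matrix.of ![![-2, 3, 0, 1], ![0, 2, 0, 1], ![0, 1, 2, 1], ![4, 0, 0, 1]] := by
    ext i j; fin_cases i <;> fin_cases j <;> rfl
  rw [hM]
  simp [Matrix.det_succ_row_zero, Fin.sum_univ_succ, Fin.succAbove, Matrix.submatrix_apply, Fin.castSucc, Fin.castAdd, Fin.castLE, Fin.succ]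
  all_goals norm_num

lemma nd0346 : ¬ JIndep ({0, 3, 4, 6} : Set (Fin 8)) := by
  rw [show ({0, 3, 4, 6} : Set (Fin 8)) = range ![0, 3, 4, 6] from by ext x; revert x; decide]
  refine jndep _ (by decide) ?_
  have hM : Matrix.of (Jvec ∘ ![0, 3, 4, 6]) = Matrix.of ![![-2, 3, 0, 1], ![1, 0, 3, 1], ![1, 0, 0, 1], ![0, 1, 0, 1]] := by
    ext i j; fin_cases i <;> fin_cases j <;> rfl
  rw [hM]
  simp [Matrix.det_succ_row_zero, Fin.sum_univ_succ, Fin.succAbove, Matrix.submatrix_apply, Fin.castSucc, Fin.castAdd, Fin.castLE, Fin.succ]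
  all_goals norm_num

lemma nd1256 : ¬ JIndep ({1, 2, 5, 6} : Set (Fin 8)) := by
  rw [show ({1, 2, 5, 6} : Set (Fin 8)) = range ![1, 2, 5, 6] from by ext x; revert x; decide]
  refine jndep _ (by decide) ?_
  have hM : Matrix.of (Jvec ∘ ![1, 2, 5, 6]) = Matrix.of ![![0, 0, 1, 1], ![0, 2, 0, 1], ![0, 1, 2, 1], ![0, 1, 0, 1]] := by
    ext i j; fin_cases i <;> fin_cases j <;> rfl
  rw [hM]
  simp [Matrix.det_succ_row_zero, Fin.sum_univ_succ, Fin.succAbove, Matrix.submatrix_apply, Fin.castSucc, Fin.castAdd, Fin.castLE, Fin.succ]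
  all_goals norm_num

lemma nd0356 : ¬ JIndep ({0, 3, 5, 6} : Set (Fin 8)) := by
  rw [show ({0, 3, 5, 6} : Set (Fin 8)) = range ![0, 3, 5, 6] from by ext x; revert x; decide]
  refine jndep _ (by decide) ?_
  have hM : Matrix.of (Jvec ∘ ![0, 3, 5, 6]) = Matrix.of ![![-2, 3, 0, 1], ![1, 0, 3, 1], ![0, 1, 2, 1], ![0, 1, 0, 1]] := by
    ext i j; fin_cases i <;> fin_cases j <;> rfl
  rw [hM]
  simp [Matrix.det_succ_row_zero, Fin.sum_univ_succ, Fin.succAbove, Matrix.submatrix_apply, Fin.castSucc, Fin.castAdd, Fin.castLE, Fin.succ]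
  all_goals norm_num

lemma nd0357 : ¬ JIndep ({0, 3, 5, 7} : Set (Fin 8)) := by
  rw [show ({0, 3, 5, 7} : Set (Fin 8)) = range ![0, 3, 5, 7] from by ext x; revert x; decide]
  refine jndep _ (by decide) ?_
  have hM : Matrix.of (Jvec ∘ ![0, 3, 5, 7]) = Matrix.of ![![-2, 3, 0, 1], ![1, 0, 3, 1], ![0, 1, 2, 1], ![4, 0, 0, 1]] := by
    ext i j; fin_cases i <;> fin_cases j <;> rfl
  rw [hM]
  simp [Matrix.det_succ_row_zero, Fin.sum_univ_succ, Fin.succAbove, Matrix.submatrix_apply, Fin.castSucc, Fin.castAdd, Fin.castLE, Fin.succ]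
  all_goals norm_num

/-- Oxley's `J`, represented by the eight vectors, is a counterexample to `C(2)`:
the vectors split into two bases, each pair `I_i` is independent, but no
partition into two bases splits every pair. -/
theorem J_counterexample_to_C2 :
    (∃ B₁ B₂ : Set (Fin 8), B₁ ∪ B₂ = univ ∧ Disjoint B₁ B₂ ∧
      B₁.ncard = 4 ∧ B₂.ncard = 4 ∧ JIndep B₁ ∧ JIndep B₂) ∧
    (∀ i, JIndep (Jpairs i)) ∧
    ¬ ∃ B₁ B₂ : Set (Fin 8), B₁ ∪ B₂ = univ ∧ Disjoint B₁ B₂ ∧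
        B₁.ncard = 4 ∧ B₂.ncard = 4 ∧ JIndep B₁ ∧ JIndep B₂ ∧
        ∀ i, (Jpairs i ∩ B₁).ncard = 1 ∧ (Jpairs i ∩ B₂).ncard = 1 := by
  refine ⟨⟨{0,1,2,3}, {4,5,6,7}, ?_, ?_, ?_, ?_, ji0123, ji4567⟩, ?_, ?_⟩
  · ext x; revert x; decide
  · rw [Set.disjoint_left]; decide
  · rw [Set.ncard_eq_toFinset_card']; decide
  · rw [Set.ncard_eq_toFinset_card']; decide
  · intro i
    fin_cases i
    · exact ji0123.mono (show ({0,1} : Set (Fin 8)) ⊆ {0,1,2,3} by rintro x (rfl | rfl) <;> decide)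
    · exact ji0123.mono (show ({2,3} : Set (Fin 8)) ⊆ {0,1,2,3} by rintro x (rfl | rfl) <;> decide)
    · exact ji4567.mono (show ({4,5} : Set (Fin 8)) ⊆ {4,5,6,7} by rintro x (rfl | rfl) <;> decide)
    · exact ji4567.mono (show ({6,7} : Set (Fin 8)) ⊆ {4,5,6,7} by rintro x (rfl | rfl) <;> decide)
  · rintro ⟨B₁, B₂, hu, hdj, -, -, hi1, hi2, hsplit⟩
    have hmem : ∀ x : Fin 8, x ∉ B₁ → x ∈ B₂ := fun x hx => by
      have hx2 : x ∈ B₁ ∪ B₂ := by rw [hu]; exact Set.mem_univ x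
      exact hx2.resolve_left hx
    have h0 : (0 : Fin 8) ∈ B₁ ↔ (1 : Fin 8) ∉ B₁ :=
      pair_mem (by decide) (show (({0,1} : Set (Fin 8)) ∩ B₁).ncard = 1 from (hsplit 0).1)
    have h1 : (2 : Fin 8) ∈ B₁ ↔ (3 : Fin 8) ∉ B₁ :=
      pair_mem (by decide) (show (({2,3} : Set (Fin 8)) ∩ B₁).ncard = 1 from (hsplit 1).1)
    have h2 : (4 : Fin 8) ∈ B₁ ↔ (5 : Fin 8) ∉ B₁ :=
      pair_mem (by decide) (show (({4,5} : Set (Fin 8)) ∩ B₁).ncard = 1 from (hsplit 2).1)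
    have h3 : (6 : Fin 8) ∈ B₁ ↔ (7 : Fin 8) ∉ B₁ :=
      pair_mem (by decide) (show (({6,7} : Set (Fin 8)) ∩ B₁).ncard = 1 from (hsplit 3).1)
    by_cases hx0 : (0 : Fin 8) ∈ B₁ <;> by_cases hx2 : (2 : Fin 8) ∈ B₁ <;>
      by_cases hx4 : (4 : Fin 8) ∈ B₁ <;> by_cases hx6 : (6 : Fin 8) ∈ B₁
    · -- B₁ contains [0, 2, 4, 6]
      have m1 : (1 : Fin 8) ∈ B₂ := hmem 1 (h0.1 hx0)
      have m3 : (3 : Fin 8) ∈ B₂ := hmem 3 (h1.1 hx2)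
      have m5 : (5 : Fin 8) ∈ B₂ := hmem 5 (h2.1 hx4)
      have m7 : (7 : Fin 8) ∈ B₂ := hmem 7 (h3.1 hx6)
      exact nd0246 (hi1.mono (by rintro x (rfl | rfl | rfl | rfl); exacts [hx0, hx2, hx4, hx6]))
    · -- B₁ contains [0, 2, 4, 7]
      have m1 : (1 : Fin 8) ∈ B₂ := hmem 1 (h0.1 hx0)
      have m3 : (3 : Fin 8) ∈ B₂ := hmem 3 (h1.1 hx2)
      have m5 : (5 : Fin 8) ∈ B₂ := hmem 5 (h2.1 hx4)
      have m7 : (7 : Fin 8) ∈ B₁ := by by_contra hh; exact hx6 (h3.2 hh)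
      have m6 : (6 : Fin 8) ∈ B₂ := hmem 6 hx6
      exact nd0247 (hi1.mono (by rintro x (rfl | rfl | rfl | rfl); exacts [hx0, hx2, hx4, m7]))
    · -- B₁ contains [0, 2, 5, 6]
      have m1 : (1 : Fin 8) ∈ B₂ := hmem 1 (h0.1 hx0)
      have m3 : (3 : Fin 8) ∈ B₂ := hmem 3 (h1.1 hx2)
      have m5 : (5 : Fin 8) ∈ B₁ := by by_contra hh; exact hx4 (h2.2 hh)
      have m4 : (4 : Fin 8) ∈ B₂ := hmem 4 hx4
      have m7 : (7 : Fin 8) ∈ B₂ := hmem 7 (h3.1 hx6)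
      exact nd1347 (hi2.mono (by rintro x (rfl | rfl | rfl | rfl); exacts [m1, m3, m4, m7]))
    · -- B₁ contains [0, 2, 5, 7]
      have m1 : (1 : Fin 8) ∈ B₂ := hmem 1 (h0.1 hx0)
      have m3 : (3 : Fin 8) ∈ B₂ := hmem 3 (h1.1 hx2)
      have m5 : (5 : Fin 8) ∈ B₁ := by by_contra hh; exact hx4 (h2.2 hh)
      have m4 : (4 : Fin 8) ∈ B₂ := hmem 4 hx4
      have m7 : (7 : Fin 8) ∈ B₁ := by by_contra hh; exact hx6 (h3.2 hh)
      have m6 : (6 : Fin 8) ∈ B₂ := hmem 6 hx6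
      exact nd0257 (hi1.mono (by rintro x (rfl | rfl | rfl | rfl); exacts [hx0, hx2, m5, m7]))
    · -- B₁ contains [0, 3, 4, 6]
      have m1 : (1 : Fin 8) ∈ B₂ := hmem 1 (h0.1 hx0)
      have m3 : (3 : Fin 8) ∈ B₁ := by by_contra hh; exact hx2 (h1.2 hh)
      have m2 : (2 : Fin 8) ∈ B₂ := hmem 2 hx2
      have m5 : (5 : Fin 8) ∈ B₂ := hmem 5 (h2.1 hx4)
      have m7 : (7 : Fin 8) ∈ B₂ := hmem 7 (h3.1 hx6)
      exact nd0346 (hi1.mono (by rintro x (rfl | rfl | rfl | rfl); exacts [hx0, m3, hx4, hx6]))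
    · -- B₁ contains [0, 3, 4, 7]
      have m1 : (1 : Fin 8) ∈ B₂ := hmem 1 (h0.1 hx0)
      have m3 : (3 : Fin 8) ∈ B₁ := by by_contra hh; exact hx2 (h1.2 hh)
      have m2 : (2 : Fin 8) ∈ B₂ := hmem 2 hx2
      have m5 : (5 : Fin 8) ∈ B₂ := hmem 5 (h2.1 hx4)
      have m7 : (7 : Fin 8) ∈ B₁ := by by_contra hh; exact hx6 (h3.2 hh)
      have m6 : (6 : Fin 8) ∈ B₂ := hmem 6 hx6
      exact nd1256 (hi2.mono (by rintro x (rfl | rfl | rfl | rfl); exacts [m1, m2, m5, m6]))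
    · -- B₁ contains [0, 3, 5, 6]
      have m1 : (1 : Fin 8) ∈ B₂ := hmem 1 (h0.1 hx0)
      have m3 : (3 : Fin 8) ∈ B₁ := by by_contra hh; exact hx2 (h1.2 hh)
      have m2 : (2 : Fin 8) ∈ B₂ := hmem 2 hx2
      have m5 : (5 : Fin 8) ∈ B₁ := by by_contra hh; exact hx4 (h2.2 hh)
      have m4 : (4 : Fin 8) ∈ B₂ := hmem 4 hx4
      have m7 : (7 : Fin 8) ∈ B₂ := hmem 7 (h3.1 hx6)
      exact nd0356 (hi1.mono (by rintro x (rfl | rfl | rfl | rfl); exacts [hx0, m3, m5, hx6]))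
    · -- B₁ contains [0, 3, 5, 7]
      have m1 : (1 : Fin 8) ∈ B₂ := hmem 1 (h0.1 hx0)
      have m3 : (3 : Fin 8) ∈ B₁ := by by_contra hh; exact hx2 (h1.2 hh)
      have m2 : (2 : Fin 8) ∈ B₂ := hmem 2 hx2
      have m5 : (5 : Fin 8) ∈ B₁ := by by_contra hh; exact hx4 (h2.2 hh)
      have m4 : (4 : Fin 8) ∈ B₂ := hmem 4 hx4
      have m7 : (7 : Fin 8) ∈ B₁ := by by_contra hh; exact hx6 (h3.2 hh)
      have m6 : (6 : Fin 8) ∈ B₂ := hmem 6 hx6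
      exact nd0357 (hi1.mono (by rintro x (rfl | rfl | rfl | rfl); exacts [hx0, m3, m5, m7]))
    · -- B₁ contains [1, 2, 4, 6]
      have m1 : (1 : Fin 8) ∈ B₁ := by by_contra hh; exact hx0 (h0.2 hh)
      have m0 : (0 : Fin 8) ∈ B₂ := hmem 0 hx0
      have m3 : (3 : Fin 8) ∈ B₂ := hmem 3 (h1.1 hx2)
      have m5 : (5 : Fin 8) ∈ B₂ := hmem 5 (h2.1 hx4)
      have m7 : (7 : Fin 8) ∈ B₂ := hmem 7 (h3.1 hx6)
      exact nd0357 (hi2.mono (by rintro x (rfl | rfl | rfl | rfl); exacts [m0, m3, m5, m7]))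
    · -- B₁ contains [1, 2, 4, 7]
      have m1 : (1 : Fin 8) ∈ B₁ := by by_contra hh; exact hx0 (h0.2 hh)
      have m0 : (0 : Fin 8) ∈ B₂ := hmem 0 hx0
      have m3 : (3 : Fin 8) ∈ B₂ := hmem 3 (h1.1 hx2)
      have m5 : (5 : Fin 8) ∈ B₂ := hmem 5 (h2.1 hx4)
      have m7 : (7 : Fin 8) ∈ B₁ := by by_contra hh; exact hx6 (h3.2 hh)
      have m6 : (6 : Fin 8) ∈ B₂ := hmem 6 hx6
      exact nd0356 (hi2.mono (by rintro x (rfl | rfl | rfl | rfl); exacts [m0, m3, m5, m6]))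
    · -- B₁ contains [1, 2, 5, 6]
      have m1 : (1 : Fin 8) ∈ B₁ := by by_contra hh; exact hx0 (h0.2 hh)
      have m0 : (0 : Fin 8) ∈ B₂ := hmem 0 hx0
      have m3 : (3 : Fin 8) ∈ B₂ := hmem 3 (h1.1 hx2)
      have m5 : (5 : Fin 8) ∈ B₁ := by by_contra hh; exact hx4 (h2.2 hh)
      have m4 : (4 : Fin 8) ∈ B₂ := hmem 4 hx4
      have m7 : (7 : Fin 8) ∈ B₂ := hmem 7 (h3.1 hx6)
      exact nd1256 (hi1.mono (by rintro x (rfl | rfl | rfl | rfl); exacts [m1, hx2, m5, hx6]))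
    · -- B₁ contains [1, 2, 5, 7]
      have m1 : (1 : Fin 8) ∈ B₁ := by by_contra hh; exact hx0 (h0.2 hh)
      have m0 : (0 : Fin 8) ∈ B₂ := hmem 0 hx0
      have m3 : (3 : Fin 8) ∈ B₂ := hmem 3 (h1.1 hx2)
      have m5 : (5 : Fin 8) ∈ B₁ := by by_contra hh; exact hx4 (h2.2 hh)
      have m4 : (4 : Fin 8) ∈ B₂ := hmem 4 hx4
      have m7 : (7 : Fin 8) ∈ B₁ := by by_contra hh; exact hx6 (h3.2 hh)
      have m6 : (6 : Fin 8) ∈ B₂ := hmem 6 hx6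
      exact nd0346 (hi2.mono (by rintro x (rfl | rfl | rfl | rfl); exacts [m0, m3, m4, m6]))
    · -- B₁ contains [1, 3, 4, 6]
      have m1 : (1 : Fin 8) ∈ B₁ := by by_contra hh; exact hx0 (h0.2 hh)
      have m0 : (0 : Fin 8) ∈ B₂ := hmem 0 hx0
      have m3 : (3 : Fin 8) ∈ B₁ := by by_contra hh; exact hx2 (h1.2 hh)
      have m2 : (2 : Fin 8) ∈ B₂ := hmem 2 hx2
      have m5 : (5 : Fin 8) ∈ B₂ := hmem 5 (h2.1 hx4)
      have m7 : (7 : Fin 8) ∈ B₂ := hmem 7 (h3.1 hx6)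
      exact nd0257 (hi2.mono (by rintro x (rfl | rfl | rfl | rfl); exacts [m0, m2, m5, m7]))
    · -- B₁ contains [1, 3, 4, 7]
      have m1 : (1 : Fin 8) ∈ B₁ := by by_contra hh; exact hx0 (h0.2 hh)
      have m0 : (0 : Fin 8) ∈ B₂ := hmem 0 hx0
      have m3 : (3 : Fin 8) ∈ B₁ := by by_contra hh; exact hx2 (h1.2 hh)
      have m2 : (2 : Fin 8) ∈ B₂ := hmem 2 hx2
      have m5 : (5 : Fin 8) ∈ B₂ := hmem 5 (h2.1 hx4)
      have m7 : (7 : Fin 8) ∈ B₁ := by by_contra hh; exact hx6 (h3.2 hh)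
      have m6 : (6 : Fin 8) ∈ B₂ := hmem 6 hx6
      exact nd1347 (hi1.mono (by rintro x (rfl | rfl | rfl | rfl); exacts [m1, m3, hx4, m7]))
    · -- B₁ contains [1, 3, 5, 6]
      have m1 : (1 : Fin 8) ∈ B₁ := by by_contra hh; exact hx0 (h0.2 hh)
      have m0 : (0 : Fin 8) ∈ B₂ := hmem 0 hx0
      have m3 : (3 : Fin 8) ∈ B₁ := by by_contra hh; exact hx2 (h1.2 hh)
      have m2 : (2 : Fin 8) ∈ B₂ := hmem 2 hx2
      have m5 : (5 : Fin 8) ∈ B₁ := by by_contra hh; exact hx4 (h2.2 hh)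
      have m4 : (4 : Fin 8) ∈ B₂ := hmem 4 hx4
      have m7 : (7 : Fin 8) ∈ B₂ := hmem 7 (h3.1 hx6)
      exact nd0247 (hi2.mono (by rintro x (rfl | rfl | rfl | rfl); exacts [m0, m2, m4, m7]))
    · -- B₁ contains [1, 3, 5, 7]
      have m1 : (1 : Fin 8) ∈ B₁ := by by_contra hh; exact hx0 (h0.2 hh)
      have m0 : (0 : Fin 8) ∈ B₂ := hmem 0 hx0
      have m3 : (3 : Fin 8) ∈ B₁ := by by_contra hh; exact hx2 (h1.2 hh)
      have m2 : (2 : Fin 8) ∈ B₂ := hmem 2 hx2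
      have m5 : (5 : Fin 8) ∈ B₁ := by by_contra hh; exact hx4 (h2.2 hh)
      have m4 : (4 : Fin 8) ∈ B₂ := hmem 4 hx4
      have m7 : (7 : Fin 8) ∈ B₁ := by by_contra hh; exact hx6 (h3.2 hh)
      have m6 : (6 : Fin 8) ∈ B₂ := hmem 6 hx6
      exact nd0246 (hi2.mono (by rintro x (rfl | rfl | rfl | rfl); exacts [m0, m2, m4, m6]))
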